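/- arXiv:2603.14653 — 2 statements merged into one kernel-verified Lean document; each statement's English description precedes it below -/
import Mathlib

section
/- Let F = F(T,A) ⊆ ℝ^n be a self-affine set (T ∈ M_n(ℝ) expanding, A ⊂ ℝ^n finite nonempty). Then there exist an integer m ≥ 2, a vector a ∈ ℤ^n, an integer c₀ ≥ 1 and a nonempty compact set Γ ⊆ ℝ^n of positive Lebesgue measure such that, with M := m·I and D := a + c₀·{0,1,…,m−1}^n ⊂ ℤ^n (so that #D = m^n = |det M|), one has Γ = ⋃_{d∈D} M^{-1}(Γ + d) and F ⊆ Γ. In other words, every self-affine set is contained in an integral self-affine tile. -/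
open Filter MeasureTheory Metric Set Matrix
open scoped Topology ENNReal NNReal

noncomputable section

namespace FracPert

/-- View a plain vector as a point of Euclidean space. -/
def euc {n : ℕ} (v : Fin n → ℝ) : EuclideanSpace ℝ (Fin n) := WithLp.toLp 2 v

/-- The real matrix associated with an integer matrix. -/
def intMat {n : ℕ} (T : Matrix (Fin n) (Fin n) ℤ) : Matrix (Fin n) (Fin n) ℝ :=
  T.map fun x => (x : ℝ)

/-- An integer vector as a real vector. -/
def zVec {n : ℕ} (v : Fin n → ℤ) : Fin n → ℝ := fun i => (v i : ℝ)

/-- An integer matrix is expanding if all of its complex eigenvalues have modulus `> 1`. -/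
def IsExpandingZ {n : ℕ} (T : Matrix (Fin n) (Fin n) ℤ) : Prop :=
  ∀ μ : ℂ, (T.map fun x => (x : ℂ)).charpoly.IsRoot μ → 1 < ‖μ‖

/-- A real matrix is expanding if all of its complex eigenvalues have modulus `> 1`. -/
def IsExpandingR {n : ℕ} (T : Matrix (Fin n) (Fin n) ℝ) : Prop :=
  ∀ μ : ℂ, (T.map fun x => (x : ℂ)).charpoly.IsRoot μ → 1 < ‖μ‖

/-- `F` is the self-affine set generated by the real matrix `M` and the digit set `A`:
`F` is nonempty, compact, and `F = ⋃_{a ∈ A} M⁻¹ (F + a)`. -/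
def IsSelfAffineR {n : ℕ} (M : Matrix (Fin n) (Fin n) ℝ) (A : Set (Fin n → ℝ))
    (F : Set (EuclideanSpace ℝ (Fin n))) : Prop :=
  F.Nonempty ∧ IsCompact F ∧
    F = ⋃ a ∈ A, (fun x : EuclideanSpace ℝ (Fin n) => euc (M⁻¹ *ᵥ (x + euc a))) '' F

/-- Integral self-affine set. -/
def IsSelfAffineZ {n : ℕ} (T : Matrix (Fin n) (Fin n) ℤ) (A : Set (Fin n → ℤ))
    (F : Set (EuclideanSpace ℝ (Fin n))) : Prop :=
  IsSelfAffineR (intMat T) (zVec '' A) F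

/-- The iterated digit sets `A_k = {∑_{i=1}^k T^{k-i} a_i : a_i ∈ A}`. -/
def digitSetIter {n : ℕ} (T : Matrix (Fin n) (Fin n) ℤ) (A : Set (Fin n → ℤ)) (k : ℕ) :
    Set (Fin n → ℤ) :=
  { v | ∃ a : Fin k → Fin n → ℤ, (∀ i, a i ∈ A) ∧
      v = ∑ i : Fin k, (T ^ (k - 1 - (i : ℕ))) *ᵥ a i }

/-- The iterated digit sets for a real matrix. -/
def digitSetIterR {n : ℕ} (J : Matrix (Fin n) (Fin n) ℝ) (A : Set (Fin n → ℝ)) (k : ℕ) :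
    Set (Fin n → ℝ) :=
  { v | ∃ a : Fin k → Fin n → ℝ, (∀ i, a i ∈ A) ∧
      v = ∑ i : Fin k, (J ^ (k - 1 - (i : ℕ))) *ᵥ a i }

/-- The signed floor. -/
def sfloor (t : ℝ) : ℤ := if 0 ≤ t then ⌊t⌋ else -⌊|t|⌋

/-- The signed ceiling. -/
def sceil (t : ℝ) : ℤ := if 0 ≤ t then ⌈t⌉ else -⌈|t|⌉

/-- Entrywise signed floor of a vector. -/
def sfloorVec {n : ℕ} (v : Fin n → ℝ) : Fin n → ℤ := fun i => sfloor (v i)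

/-- The perturbed matrix `T_k`: the entrywise signed ceiling of `J^k`. -/
def pertMat {n : ℕ} (J : Matrix (Fin n) (Fin n) ℝ) (k : ℕ) : Matrix (Fin n) (Fin n) ℤ :=
  Matrix.of fun i j => sceil ((J ^ k) i j)

/-- A real Jordan block for a real eigenvalue: lower triangular, `lam` on the diagonal,
`1` on the subdiagonal. -/
def realJordanBlock (d : ℕ) (lam : ℝ) : Matrix (Fin d) (Fin d) ℝ :=
  Matrix.of fun i j =>
    if (i : ℕ) = (j : ℕ) then lam else if (i : ℕ) = (j : ℕ) + 1 then 1 else 0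

/-- A real Jordan block for a non-real eigenvalue `a + b i`, made of `2 × 2` blocks:
`C = [[a, -b], [b, a]]` on the block diagonal and `I₂` on the block subdiagonal. -/
def complexJordanBlock (m : ℕ) (a b : ℝ) : Matrix (Fin (2 * m)) (Fin (2 * m)) ℝ :=
  Matrix.of fun i j =>
    if (i : ℕ) / 2 = (j : ℕ) / 2 then
      (if (i : ℕ) % 2 = (j : ℕ) % 2 then a else if (i : ℕ) % 2 = 0 then -b else b)
    else if (i : ℕ) / 2 = (j : ℕ) / 2 + 1 then
      (if (i : ℕ) % 2 = (j : ℕ) % 2 then 1 else 0)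
    else 0

/-- `B` is a real Jordan-type block with eigenvalue modulus `ρ` and algebraic multiplicity
`np`. -/
def IsJordanBlock {d : ℕ} (B : Matrix (Fin d) (Fin d) ℝ) (ρ : ℝ) (np : ℕ) : Prop :=
  (d = np ∧ ∃ lam : ℝ, |lam| = ρ ∧ B = realJordanBlock d lam) ∨
  (∃ h : d = 2 * np, ∃ a b : ℝ, b ≠ 0 ∧ Real.sqrt (a ^ 2 + b ^ 2) = ρ ∧
      B = Matrix.reindex (finCongr h).symm (finCongr h).symm (complexJordanBlock np a b))

/-- The index identification `(Σ p, Fin (d p)) ≃ Fin n` respects the block order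
(lexicographic order on the sigma type). -/
def IsJordanArrangement {n s : ℕ} (d : Fin s → ℕ)
    (e : ((p : Fin s) × Fin (d p)) ≃ Fin n) : Prop :=
  ∀ x y : (p : Fin s) × Fin (d p), Sigma.Lex (· < ·) (fun _ => (· < ·)) x y → e x < e y

/-- `J` is a real Jordan-type matrix: a block diagonal matrix with real Jordan-type
blocks whose eigenvalue moduli are `ρ 0 < ρ 1 < ⋯`, all `> 1`. -/
def IsRealJordanLike {n s : ℕ} (J : Matrix (Fin n) (Fin n) ℝ) (ρ : Fin s → ℝ) : Prop :=
  (∀ p, 1 < ρ p) ∧ StrictMono ρ ∧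
  ∃ (d np : Fin s → ℕ) (B : ∀ p, Matrix (Fin (d p)) (Fin (d p)) ℝ)
    (e : ((p : Fin s) × Fin (d p)) ≃ Fin n),
    (∀ p, 0 < np p) ∧ (∀ p, IsJordanBlock (B p) (ρ p) (np p)) ∧
    IsJordanArrangement d e ∧
    J = Matrix.reindex e e (Matrix.blockDiagonal' B)

/-- Perturbation data for an integer matrix `T`: an invertible real matrix `P` such that
`J = P⁻¹ T P` is a real Jordan-type matrix and distinct points of the lattice `P⁻¹ ℤ^n`
are at distance `> n`. -/
def IsPerturbationData {n s : ℕ} (T : Matrix (Fin n) (Fin n) ℤ)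
    (P : Matrix (Fin n) (Fin n) ℝ) (ρ : Fin s → ℝ) : Prop :=
  IsUnit P ∧ IsRealJordanLike (P⁻¹ * intMat T * P) ρ ∧
    ∀ v w : Fin n → ℤ, v ≠ w →
      (n : ℝ) < ‖euc (P⁻¹ *ᵥ zVec v - P⁻¹ *ᵥ zVec w)‖

/-- The digit sets `Ã_k = P⁻¹ A_k`. -/
def tildeDigits {n : ℕ} (T : Matrix (Fin n) (Fin n) ℤ) (A : Set (Fin n → ℤ))
    (P : Matrix (Fin n) (Fin n) ℝ) (k : ℕ) : Set (Fin n → ℝ) :=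
  (fun a => P⁻¹ *ᵥ zVec a) '' digitSetIter T A k

/-- The perturbed digit sets `D_k = ⌊Ã_k⌋±`. -/
def pertDigits {n : ℕ} (T : Matrix (Fin n) (Fin n) ℤ) (A : Set (Fin n → ℤ))
    (P : Matrix (Fin n) (Fin n) ℝ) (k : ℕ) : Set (Fin n → ℤ) :=
  sfloorVec '' tildeDigits T A P k

/-- `N(S, δ)`: the smallest number of sets of diameter at most `δ` needed to cover `S`. -/
def coverNum {n : ℕ} (S : Set (EuclideanSpace ℝ (Fin n))) (δ : ℝ) : ℕ :=
  sInf { m : ℕ | ∃ C : Fin m → Set (EuclideanSpace ℝ (Fin n)),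
    (∀ i, Metric.diam (C i) ≤ δ) ∧ S ⊆ ⋃ i, C i }

/-- The lower box dimension. -/
def lowerBoxDim {n : ℕ} (S : Set (EuclideanSpace ℝ (Fin n))) : ℝ :=
  liminf (fun δ : ℝ => Real.log (coverNum S δ) / Real.log (1 / δ)) (𝓝[>] (0 : ℝ))

/-- The upper box dimension. -/
def upperBoxDim {n : ℕ} (S : Set (EuclideanSpace ℝ (Fin n))) : ℝ :=
  limsup (fun δ : ℝ => Real.log (coverNum S δ) / Real.log (1 / δ)) (𝓝[>] (0 : ℝ))

/-- The integer lattice `ℤ^n` inside Euclidean space. -/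
def intLattice (n : ℕ) : AddSubgroup (EuclideanSpace ℝ (Fin n)) where
  carrier := { v | ∀ i, ∃ m : ℤ, v i = (m : ℝ) }
  zero_mem' := fun i => ⟨0, by simp⟩
  add_mem' := by
    intro a b ha hb i
    obtain ⟨ma, hma⟩ := ha i
    obtain ⟨mb, hmb⟩ := hb i
    exact ⟨ma + mb, by push_cast; rw [← hma, ← hmb]; rfl⟩
  neg_mem' := by
    intro a ha i
    obtain ⟨ma, hma⟩ := ha i
    exact ⟨-ma, by push_cast; rw [← hma]; rfl⟩

theorem intLattice_isClosed (n : ℕ) :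
    IsClosed ((intLattice n : Set (EuclideanSpace ℝ (Fin n)))) := by
  have h : (intLattice n : Set (EuclideanSpace ℝ (Fin n))) =
      ⋂ i, (fun v : EuclideanSpace ℝ (Fin n) => v i) ⁻¹'
        (Set.range (fun m : ℤ => (m : ℝ))) := by
    ext v
    simp only [Set.mem_iInter, Set.mem_preimage, Set.mem_range]
    constructor
    · intro hv i; obtain ⟨m, hm⟩ := hv i; exact ⟨m, hm.symm⟩
    · intro hv i; obtain ⟨m, hm⟩ := hv i; exact ⟨m, hm.symm⟩
  rw [h]
  exact isClosed_iInter fun i =>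
    (Int.isClosedEmbedding_coe_real.isClosed_range).preimage
      (EuclideanSpace.proj (𝕜 := ℝ) i).continuous

/-- The `n`-torus `ℝ^n / ℤ^n` (with the quotient metric). -/
abbrev Torus (n : ℕ) := EuclideanSpace ℝ (Fin n) ⧸ intLattice n

noncomputable instance (n : ℕ) : NormedAddCommGroup (Torus n) :=
  have : IsClosed ((intLattice n : Set (EuclideanSpace ℝ (Fin n)))) := intLattice_isClosed n
  QuotientAddGroup.instNormedAddCommGroup (intLattice n)

instance (n : ℕ) : MeasurableSpace (Torus n) := borel _
instance (n : ℕ) : BorelSpace (Torus n) := ⟨rfl⟩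

/-- The quotient map `ℝ^n → 𝕋^n`. -/
def tproj (n : ℕ) : EuclideanSpace ℝ (Fin n) → Torus n := QuotientAddGroup.mk

/-- Multiplication by a matrix as an additive homomorphism of Euclidean space. -/
def mulVecAddHom {n : ℕ} (M : Matrix (Fin n) (Fin n) ℝ) :
    EuclideanSpace ℝ (Fin n) →+ EuclideanSpace ℝ (Fin n) where
  toFun v := euc (M *ᵥ v)
  map_zero' := by
    show euc (M *ᵥ (0 : Fin n → ℝ)) = 0
    simp [euc]
  map_add' x y := by
    show euc (M *ᵥ ((x : Fin n → ℝ) + (y : Fin n → ℝ))) = _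
    rw [Matrix.mulVec_add]
    rfl

theorem intLattice_le_comap {n : ℕ} (T : Matrix (Fin n) (Fin n) ℤ) :
    intLattice n ≤ (intLattice n).comap (mulVecAddHom (intMat T)) := by
  intro v hv
  intro i
  choose m hm using hv
  refine ⟨∑ j, T i j * m j, ?_⟩
  show (intMat T *ᵥ (v : Fin n → ℝ)) i = _
  simp only [intMat, Matrix.mulVec, dotProduct, Matrix.map_apply]
  push_cast
  refine Finset.sum_congr rfl fun j _ => ?_
  rw [hm j]

/-- The toral endomorphism induced by an integer matrix `T`, determined by
`φ_T (π x) = π (T x)`. -/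
def torusMap {n : ℕ} (T : Matrix (Fin n) (Fin n) ℤ) : Torus n → Torus n :=
  QuotientAddGroup.map (intLattice n) (intLattice n) (mulVecAddHom (intMat T))
    (intLattice_le_comap T)

/-- `μ` is invariant under `f`. -/
def MeasInvariant {α : Type*} [MeasurableSpace α] (f : α → α) (μ : Measure α) : Prop :=
  ∀ B : Set α, MeasurableSet B → μ (f ⁻¹' B) = μ B

/-- `μ` is an ergodic invariant measure for `f`. -/
def MeasErgodic {α : Type*} [MeasurableSpace α] (f : α → α) (μ : Measure α) : Prop :=
  MeasInvariant f μ ∧ ∀ B : Set α, MeasurableSet B → f ⁻¹' B = B → μ B = 0 ∨ μ B = 1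

/-- The (Euclidean) operator norm of a real matrix. -/
def opNorm {n : ℕ} (M : Matrix (Fin n) (Fin n) ℝ) : ℝ :=
  sSup { t : ℝ | ∃ v : EuclideanSpace ℝ (Fin n), ‖v‖ ≤ 1 ∧ t = ‖euc (M *ᵥ v)‖ }

/-- The smallest modulus of a complex eigenvalue of an integer matrix. -/
def minMod {n : ℕ} (M : Matrix (Fin n) (Fin n) ℤ) : ℝ :=
  sInf { r : ℝ | ∃ μ : ℂ, (M.map fun x => (x : ℂ)).charpoly.IsRoot μ ∧ r = ‖μ‖ }

/-- The largest modulus of a complex eigenvalue of an integer matrix. -/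
def maxMod {n : ℕ} (M : Matrix (Fin n) (Fin n) ℤ) : ℝ :=
  sSup { r : ℝ | ∃ μ : ℂ, (M.map fun x => (x : ℂ)).charpoly.IsRoot μ ∧ r = ‖μ‖ }

lemma coord_abs_le {n : ℕ} (x : EuclideanSpace ℝ (Fin n)) (i : Fin n) : |x i| ≤ ‖x‖ := by
  rw [EuclideanSpace.norm_eq]
  have h : ‖x i‖^2 ≤ ∑ j, ‖x j‖^2 :=
    Finset.single_le_sum (f := fun j => ‖x j‖^2) (fun j _ => sq_nonneg _) (Finset.mem_univ i)
  calc |x i| = Real.sqrt (‖x i‖^2) := by rw [Real.sqrt_sq_eq_abs, Real.norm_eq_abs, abs_abs]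
  _ ≤ _ := Real.sqrt_le_sqrt h

/-- every self-affine set is contained in an integral self-affine tile generated
by `M = m·I` and the digit set `D = a + c₀·{0,…,m−1}^n`. -/
theorem selfAffine_subset_integral_tile {n : ℕ} (T : Matrix (Fin n) (Fin n) ℝ)
    (A : Finset (Fin n → ℝ)) (hT : IsExpandingR T) (hA : A.Nonempty)
    (F : Set (EuclideanSpace ℝ (Fin n))) (hF : IsSelfAffineR T (↑A) F) :
    ∃ (m : ℕ) (a : Fin n → ℤ) (c₀ : ℕ), 2 ≤ m ∧ 1 ≤ c₀ ∧
      ∃ Γ : Set (EuclideanSpace ℝ (Fin n)),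
        IsSelfAffineZ ((m : ℤ) • (1 : Matrix (Fin n) (Fin n) ℤ))
          { d : Fin n → ℤ | ∃ u : Fin n → ℤ, (∀ i, 0 ≤ u i ∧ u i < (m : ℤ)) ∧
              d = a + (c₀ : ℤ) • u } Γ ∧
        0 < volume Γ ∧ F ⊆ Γ := by
  classical
  obtain ⟨hFne, hFcomp, -⟩ := hF
  obtain ⟨R, hR⟩ := hFcomp.isBounded.subset_closedBall 0
  set N : ℕ := ⌈R⌉₊ with hNdef
  have hN0 : (0:ℝ) ≤ (N:ℝ) := Nat.cast_nonneg N
  refine ⟨2, fun _ => -(N:ℤ), 2*N+1, le_refl 2, by omega, ?_⟩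
  set Γ : Set (EuclideanSpace ℝ (Fin n)) :=
    {x | ∀ i, -(N:ℝ) ≤ x i ∧ x i ≤ (N:ℝ)+1} with hΓdef
  have hM : intMat (((2:ℕ):ℤ) • (1 : Matrix (Fin n) (Fin n) ℤ)) = (2:ℝ) • 1 := by
    ext i j
    simp only [intMat, Matrix.map_apply, Matrix.smul_apply, Matrix.one_apply, smul_eq_mul,
      apply_ite]
    split_ifs <;> norm_num
  have hinv : ((2:ℝ) • (1 : Matrix (Fin n) (Fin n) ℝ))⁻¹ = (2⁻¹:ℝ) • 1 := by
    apply Matrix.inv_eq_right_inv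
    rw [Matrix.smul_mul, Matrix.mul_smul, one_mul, smul_smul]
    norm_num
  have hmv : ∀ v : Fin n → ℝ,
      (intMat (((2:ℕ):ℤ) • (1 : Matrix (Fin n) (Fin n) ℤ)))⁻¹ *ᵥ v = (2⁻¹:ℝ) • v := by
    intro v
    rw [hM, hinv, Matrix.smul_mulVec, Matrix.one_mulVec]
  -- Γ is nonempty
  have h0 : euc (fun _ : Fin n => (0:ℝ)) ∈ Γ := by
    intro i
    constructor
    · show -(N:ℝ) ≤ 0; linarith
    · show (0:ℝ) ≤ (N:ℝ)+1; linarith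
  -- Γ is compact
  have hcomp : IsCompact Γ := by
    have h1 : IsCompact (Set.univ.pi fun _ : Fin n => Set.Icc (-(N:ℝ)) ((N:ℝ)+1)) :=
      isCompact_univ_pi fun _ => isCompact_Icc
    have h2 := h1.image (EuclideanSpace.equiv (Fin n) ℝ).symm.continuous
    convert h2 using 1
    ext x
    constructor
    · intro hx
      exact ⟨x, fun i _ => Set.mem_Icc.mpr (hx i), rfl⟩
    · rintro ⟨f, hf, rfl⟩ i
      exact Set.mem_Icc.mp (hf i (Set.mem_univ i))
  -- Γ has positive volume
  have hball : Metric.ball (euc (fun _ : Fin n => (2⁻¹:ℝ))) 2⁻¹ ⊆ Γ := by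
    intro x hx i
    have h1 : |x i - 2⁻¹| ≤ ‖x - euc (fun _ : Fin n => (2⁻¹:ℝ))‖ :=
      coord_abs_le (x - euc (fun _ : Fin n => (2⁻¹:ℝ))) i
    have h2 : ‖x - euc (fun _ : Fin n => (2⁻¹:ℝ))‖ < 2⁻¹ := by
      rwa [Metric.mem_ball, dist_eq_norm] at hx
    have h3 : |x i - 2⁻¹| < 2⁻¹ := lt_of_le_of_lt h1 h2
    rw [abs_lt] at h3
    exact ⟨by linarith [h3.1], by linarith [h3.2]⟩
  have hvol : 0 < volume Γ :=
    lt_of_lt_of_le (Metric.measure_ball_pos volume _ (by norm_num)) (measure_mono hball)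
  -- F ⊆ Γ
  have hFΓ : F ⊆ Γ := by
    intro x hx i
    have h1 : ‖x‖ ≤ R := by
      have := hR hx
      rwa [Metric.mem_closedBall, dist_eq_norm, sub_zero] at this
    have h2 : |x i| ≤ (N:ℝ) := le_trans (le_trans (coord_abs_le x i) h1) (Nat.le_ceil R)
    rw [abs_le] at h2
    exact ⟨h2.1, by linarith [h2.2]⟩
  refine ⟨Γ, ⟨⟨_, h0⟩, hcomp, ?_⟩, hvol, hFΓ⟩
  -- the self-affine equation
  apply Set.Subset.antisymm
  · -- Γ ⊆ union
    intro x hx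
    set u : Fin n → ℤ := fun i => if x i ≤ 2⁻¹ then 0 else 1 with hu
    have hu01 : ∀ i, u i = 0 ∨ u i = 1 := by
      intro i
      by_cases h : x i ≤ 2⁻¹ <;> simp [hu, h]
    set d : Fin n → ℤ := (fun _ => -(N:ℤ)) + ((2*N+1:ℕ):ℤ) • u with hd
    set y : EuclideanSpace ℝ (Fin n) :=
      euc (fun i => 2 * x i + (N:ℝ) - ((2*N+1:ℕ):ℝ) * (u i : ℝ)) with hy
    have hyΓ : y ∈ Γ := by
      intro i
      show -(N:ℝ) ≤ 2 * x i + (N:ℝ) - ((2*N+1:ℕ):ℝ) * (u i : ℝ) ∧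
        2 * x i + (N:ℝ) - ((2*N+1:ℕ):ℝ) * (u i : ℝ) ≤ (N:ℝ)+1
      obtain ⟨hxl, hxr⟩ := hx i
      by_cases h : x i ≤ 2⁻¹
      · have : u i = 0 := by simp [hu, h]
        rw [this]
        push_cast
        constructor <;> linarith
      · have : u i = 1 := by simp [hu, h]
        rw [this]
        push_cast
        constructor <;> nlinarith [not_le.mp h]
    have hbmem : zVec d ∈ zVec ''
        { e : Fin n → ℤ | ∃ w : Fin n → ℤ, (∀ i, 0 ≤ w i ∧ w i < ((2:ℕ):ℤ)) ∧
            e = (fun _ => -(N:ℤ)) + ((2*N+1:ℕ):ℤ) • w } := by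
      refine ⟨d, ⟨u, fun i => ?_, rfl⟩, rfl⟩
      rcases hu01 i with h | h <;> rw [h] <;> norm_num
    refine Set.mem_biUnion hbmem ⟨y, hyΓ, ?_⟩
    · show euc ((intMat (((2:ℕ):ℤ) • (1 : Matrix (Fin n) (Fin n) ℤ)))⁻¹ *ᵥ
        (y + euc (zVec d))) = x
      rw [hmv]
      ext i
      show (2⁻¹:ℝ) * ((y : Fin n → ℝ) i + zVec d i) = x i
      have hdi : (zVec d i : ℝ) = -(N:ℝ) + ((2*N+1:ℕ):ℝ) * (u i : ℝ) := by
        simp only [zVec, hd, Pi.add_apply, Pi.smul_apply, smul_eq_mul]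
        push_cast
        ring
      rw [hdi]
      show (2⁻¹:ℝ) * ((2 * x i + (N:ℝ) - ((2*N+1:ℕ):ℝ) * (u i : ℝ)) +
        (-(N:ℝ) + ((2*N+1:ℕ):ℝ) * (u i : ℝ))) = x i
      ring
  · -- union ⊆ Γ
    intro x hx
    simp only [Set.mem_iUnion, Set.mem_image, Set.mem_setOf_eq] at hx
    obtain ⟨b, ⟨d, ⟨u, hu, rfl⟩, rfl⟩, y, hyΓ, rfl⟩ := hx
    rw [hmv]
    intro i
    have hcoord : (euc ((2⁻¹:ℝ) • ((y : Fin n → ℝ) + (euc (zVec ((fun _ => -(N:ℤ)) + ((2*N+1:ℕ):ℤ) • u)) : Fin n → ℝ)))) i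
        = 2⁻¹ * ((y : Fin n → ℝ) i + (-(N:ℝ) + ((2*N+1:ℕ):ℝ) * (u i : ℝ))) := by
      show (2⁻¹:ℝ) * ((y : Fin n → ℝ) i +
        (((((fun _ => -(N:ℤ)) + ((2*N+1:ℕ):ℤ) • u) : Fin n → ℤ) i : ℝ))) = _
      simp only [Pi.add_apply, Pi.smul_apply, smul_eq_mul]
      push_cast
      ring
    rw [hcoord]
    obtain ⟨hyl, hyr⟩ := hyΓ i
    have hui : u i = 0 ∨ u i = 1 := by
      have := hu i
      omega
    rcases hui with h | h <;> rw [h] <;> push_cast <;> constructor <;> linarith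

end FracPert
end
end

section
/- Let F = F(T,A) ⊆ ℝ^n be an integral self-affine set, k ≥ 1, and a_i, a_j ∈ A_k. (a) If T^{-k}(F + a_i) ∩ T^{-k}(F + a_j) ≠ ∅, then ‖a_j − a_i‖ ≤ diam F. (b) If T^{-k}(F + a_i) ∩ T^{-k}(F + a_j) = ∅, then the extended digit differences tend to infinity uniformly: for every R > 0 there exists L ≥ k such that for all l ≥ L and all a', a'' ∈ A_{l−k}, one has ‖(T^{l−k} a_j + a'') − (T^{l−k} a_i + a')‖ > R. -/
open Filter MeasureTheory Metric Set Matrix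
open scoped Topology ENNReal NNReal

noncomputable section

namespace FracPert

/-- The cylinder set `T^{-k}(F + a)`. -/
def cylinder {n : ℕ} (T : Matrix (Fin n) (Fin n) ℤ) (k : ℕ) (a : Fin n → ℤ)
    (F : Set (EuclideanSpace ℝ (Fin n))) : Set (EuclideanSpace ℝ (Fin n)) :=
  (fun x : EuclideanSpace ℝ (Fin n) => euc ((intMat T ^ k)⁻¹ *ᵥ (x + euc (zVec a)))) '' F

/-! ### Auxiliary lemmas for Statement 8 -/

section Statement8Aux

/-- View a point of Euclidean space as a plain vector. -/
def uce {n : ℕ} (x : EuclideanSpace ℝ (Fin n)) : Fin n → ℝ := x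

open Polynomial in
/-- Every element of the spectrum of a matrix is a root of its characteristic polynomial. -/
theorem isRoot_charpoly_of_mem_spectrum {n : ℕ} (M : Matrix (Fin n) (Fin n) ℂ) {μ : ℂ}
    (hμ : μ ∈ spectrum ℂ M) : M.charpoly.IsRoot μ := by
  rw [spectrum.mem_iff] at hμ
  have hdet : ((algebraMap ℂ (Matrix (Fin n) (Fin n) ℂ)) μ - M).det = 0 := by
    by_contra h
    exact hμ ((Matrix.isUnit_iff_isUnit_det _).2 (isUnit_iff_ne_zero.2 h))
  have key : M.charpoly.eval μ = ((algebraMap ℂ (Matrix (Fin n) (Fin n) ℂ)) μ - M).det := by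
    rw [Matrix.charpoly, ← Polynomial.coe_evalRingHom, RingHom.map_det]
    congr 1
    ext i j
    by_cases hij : i = j
    · subst hij
      simp [Matrix.charmatrix_apply_eq, Matrix.algebraMap_matrix_apply]
    · simp [Matrix.charmatrix_apply_ne _ _ _ hij, Matrix.algebraMap_matrix_apply, hij]
  simpa [Polynomial.IsRoot, key] using hdet

/-- The complex matrix associated with an integer matrix. -/
def cMat {n : ℕ} (T : Matrix (Fin n) (Fin n) ℤ) : Matrix (Fin n) (Fin n) ℂ :=
  T.map fun x => (x : ℂ)

theorem isUnit_cMat {n : ℕ} (T : Matrix (Fin n) (Fin n) ℤ) (hT : IsExpandingZ T) :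
    IsUnit (cMat T) := by
  by_contra h
  have h0 : (0 : ℂ) ∈ spectrum ℂ (cMat T) := (spectrum.zero_mem_iff ℂ).2 h
  have := hT 0 (isRoot_charpoly_of_mem_spectrum _ h0)
  norm_num at this

theorem det_cMat {n : ℕ} (T : Matrix (Fin n) (Fin n) ℤ) : (cMat T).det = ((T.det : ℤ) : ℂ) :=
  (RingHom.map_det (Int.castRingHom ℂ) T).symm

theorem det_intMat {n : ℕ} (T : Matrix (Fin n) (Fin n) ℤ) : (intMat T).det = ((T.det : ℤ) : ℝ) :=
  (RingHom.map_det (Int.castRingHom ℝ) T).symm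

theorem isUnit_det_intMat {n : ℕ} (T : Matrix (Fin n) (Fin n) ℤ) (hT : IsExpandingZ T) :
    IsUnit (intMat T).det := by
  have hc := (Matrix.isUnit_iff_isUnit_det _).1 (isUnit_cMat T hT)
  rw [det_cMat, isUnit_iff_ne_zero] at hc
  have : (T.det : ℤ) ≠ 0 := by exact_mod_cast hc
  rw [det_intMat, isUnit_iff_ne_zero]
  exact_mod_cast this

theorem cMat_eq_map {n : ℕ} (T : Matrix (Fin n) (Fin n) ℤ) :
    cMat T = (intMat T).map (algebraMap ℝ ℂ) := by
  ext i j
  simp [cMat, intMat]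

section LinftyNorm

attribute [local instance] Matrix.linftyOpNormedAddCommGroup Matrix.linftyOpNormedRing
  Matrix.linftyOpNormedAlgebra

theorem nnnorm_map_complex {n : ℕ} (B : Matrix (Fin n) (Fin n) ℝ) :
    ‖B.map (algebraMap ℝ ℂ)‖₊ = ‖B‖₊ := by
  have hnn : ∀ r : ℝ, ‖algebraMap ℝ ℂ r‖₊ = ‖r‖₊ := fun r => NNReal.eq (Complex.norm_real r)
  rw [Matrix.linfty_opNNNorm_def, Matrix.linfty_opNNNorm_def]
  congr 1
  ext i
  simp [Matrix.map_apply, hnn]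

theorem inv_cMat {n : ℕ} (T : Matrix (Fin n) (Fin n) ℤ) (hT : IsExpandingZ T) :
    (cMat T)⁻¹ = ((intMat T)⁻¹).map (algebraMap ℝ ℂ) := by
  apply Matrix.inv_eq_right_inv
  rw [cMat_eq_map]
  rw [show (intMat T).map (algebraMap ℝ ℂ) = (algebraMap ℝ ℂ).mapMatrix (intMat T) from rfl,
    show ((intMat T)⁻¹).map (algebraMap ℝ ℂ) = (algebraMap ℝ ℂ).mapMatrix ((intMat T)⁻¹) from rfl,
    ← _root_.map_mul, Matrix.mul_nonsing_inv _ (isUnit_det_intMat T hT), _root_.map_one]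

/-- Norms of powers of the inverse of an expanding matrix tend to zero. -/
theorem tendsto_norm_pow_inv {n : ℕ} (T : Matrix (Fin n) (Fin n) ℤ) (hT : IsExpandingZ T) :
    Tendsto (fun l : ℕ => ‖(intMat T)⁻¹ ^ l‖) atTop (𝓝 0) := by
  rcases Nat.eq_zero_or_pos n with hn | hn
  · subst hn
    have : ∀ l : ℕ, ‖(intMat T)⁻¹ ^ l‖ = 0 := by
      intro l
      haveI : Subsingleton (Matrix (Fin 0) (Fin 0) ℝ) :=
        ⟨fun A B => by ext i j; exact i.elim0⟩
      have h0 : (intMat T)⁻¹ ^ l = 0 := Subsingleton.elim _ _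
      rw [h0, norm_zero]
    rw [show (fun l : ℕ => ‖(intMat T)⁻¹ ^ l‖) = fun _ => (0:ℝ) from funext this]
    exact tendsto_const_nhds
  haveI : Nonempty (Fin n) := ⟨⟨0, hn⟩⟩
  set a : Matrix (Fin n) (Fin n) ℂ := (cMat T)⁻¹ with ha
  have hspec : ∀ μ ∈ spectrum ℂ a, ‖μ‖₊ < 1 := by
    intro μ hμ
    obtain ⟨u, hu⟩ := isUnit_cMat T hT
    have hau : a = ↑u⁻¹ := by rw [ha, ← hu, Matrix.coe_units_inv]
    have haunit : IsUnit a := hau ▸ (u⁻¹).isUnit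
    have hμ0 : μ ≠ 0 := by
      rintro rfl
      exact ((spectrum.zero_mem_iff ℂ).1 hμ) haunit
    have hinv : μ⁻¹ ∈ spectrum ℂ (cMat T) := by
      have := (spectrum.inv_mem_iff (r := Units.mk0 μ hμ0) (a := u⁻¹)).1 (hau ▸ hμ)
      simpa [hu] using this
    have hroot := hT μ⁻¹ (isRoot_charpoly_of_mem_spectrum _ hinv)
    rw [norm_inv] at hroot
    have habs : ‖μ‖ < 1 := by
      by_contra hcon
      push_neg at hcon
      have : ‖μ‖⁻¹ ≤ 1 := by
        rw [inv_le_one_iff₀]; right; exact hcon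
      linarith
    rw [← NNReal.coe_lt_coe]
    simpa using habs
  have hfin := Matrix.finite_spectrum a
  set r : ℝ≥0 := hfin.toFinset.sup (fun μ => ‖μ‖₊) with hr
  have hrlt : r < 1 := by
    rw [hr, Finset.sup_lt_iff (by norm_num : (⊥ : ℝ≥0) < 1)]
    intro μ hμ
    exact hspec μ (hfin.mem_toFinset.1 hμ)
  have hsr : spectralRadius ℂ a ≤ (r : ℝ≥0∞) := by
    rw [spectralRadius]
    refine iSup₂_le fun μ hμ => ?_
    exact_mod_cast Finset.le_sup (f := fun μ => ‖μ‖₊) (hfin.mem_toFinset.2 hμ)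
  have hsrlt : spectralRadius ℂ a < 1 := lt_of_le_of_lt hsr (by exact_mod_cast hrlt)
  haveI : CompleteSpace (Matrix (Fin n) (Fin n) ℂ) := FiniteDimensional.complete ℂ _
  have hG := spectrum.pow_nnnorm_pow_one_div_tendsto_nhds_spectralRadius a
  obtain ⟨t, ht1, ht2⟩ := ENNReal.lt_iff_exists_nnreal_btwn.1 hsrlt
  have hev : ∀ᶠ l : ℕ in atTop, (‖a ^ l‖₊ : ℝ≥0∞) ^ (1 / (l : ℝ)) < (t : ℝ≥0∞) :=
    hG.eventually_lt_const ht1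
  obtain ⟨L0, hL0⟩ := eventually_atTop.1 hev
  have hbound : ∀ l, max L0 1 ≤ l → ‖a ^ l‖ ≤ (t : ℝ) ^ l := by
    intro l hl
    have hl0 : L0 ≤ l := le_trans (le_max_left _ _) hl
    have hl1 : 1 ≤ l := le_trans (le_max_right _ _) hl
    have h := hL0 l hl0
    have hlne : (l : ℝ) ≠ 0 := by positivity
    have h2 : ((‖a ^ l‖₊ : ℝ≥0∞) ^ (1 / (l : ℝ))) ^ (l : ℝ) ≤ ((t : ℝ≥0∞)) ^ (l : ℝ) :=
      ENNReal.rpow_le_rpow h.le (by positivity)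
    rw [← ENNReal.rpow_mul, one_div_mul_cancel hlne, ENNReal.rpow_one] at h2
    rw [ENNReal.rpow_natCast] at h2
    have h3 : (‖a ^ l‖₊ : ℝ≥0∞) ≤ ((t ^ l : ℝ≥0) : ℝ≥0∞) := by
      rw [ENNReal.coe_pow]; exact h2
    rw [ENNReal.coe_le_coe] at h3
    calc ‖a ^ l‖ = ((‖a ^ l‖₊ : ℝ≥0) : ℝ) := rfl
      _ ≤ ((t ^ l : ℝ≥0) : ℝ) := by exact_mod_cast h3
      _ = (t : ℝ) ^ l := by push_cast; ring
  have hnorm_eq : ∀ l : ℕ, ‖(intMat T)⁻¹ ^ l‖ = ‖a ^ l‖ := by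
    intro l
    have : a ^ l = ((intMat T)⁻¹ ^ l).map (algebraMap ℝ ℂ) := by
      rw [ha, inv_cMat T hT]
      rw [show ((intMat T)⁻¹).map (algebraMap ℝ ℂ)
            = (algebraMap ℝ ℂ).mapMatrix ((intMat T)⁻¹) from rfl,
        show ((intMat T)⁻¹ ^ l).map (algebraMap ℝ ℂ)
            = (algebraMap ℝ ℂ).mapMatrix ((intMat T)⁻¹ ^ l) from rfl, ← map_pow]
    rw [this, ← coe_nnnorm, ← coe_nnnorm, nnnorm_map_complex]
  have htlt : (t : ℝ) < 1 := by exact_mod_cast ht2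
  have htto : Tendsto (fun l : ℕ => (t : ℝ) ^ l) atTop (𝓝 0) :=
    tendsto_pow_atTop_nhds_zero_of_lt_one t.coe_nonneg htlt
  apply squeeze_zero' (Filter.Eventually.of_forall fun l => norm_nonneg _) _ htto
  filter_upwards [eventually_ge_atTop (max L0 1)] with l hl
  rw [hnorm_eq l]
  exact hbound l hl

theorem euc_norm_le {n : ℕ} (w : Fin n → ℝ) : ‖euc w‖ ≤ Real.sqrt n * ‖w‖ := by
  rw [EuclideanSpace.norm_eq]
  have h1 : ∀ i, ‖(euc w) i‖ ^ 2 ≤ ‖w‖ ^ 2 := by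
    intro i
    have heq : (euc w) i = w i := rfl
    rw [heq]
    have := norm_le_pi_norm w i
    have h0 : (0:ℝ) ≤ ‖w i‖ := norm_nonneg _
    nlinarith
  calc Real.sqrt (∑ i, ‖(euc w) i‖ ^ 2) ≤ Real.sqrt (∑ _i : Fin n, ‖w‖ ^ 2) := by
        apply Real.sqrt_le_sqrt
        exact Finset.sum_le_sum fun i _ => h1 i
    _ = Real.sqrt n * ‖w‖ := by
        rw [Finset.sum_const, Finset.card_univ, Fintype.card_fin, nsmul_eq_mul,
          Real.sqrt_mul (by positivity), Real.sqrt_sq (norm_nonneg _)]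

theorem pi_norm_le_euc {n : ℕ} (w : Fin n → ℝ) : ‖w‖ ≤ ‖euc w‖ := by
  refine pi_norm_le_iff_of_nonneg (norm_nonneg (euc w)) |>.2 fun i => ?_
  rw [EuclideanSpace.norm_eq]
  have : ‖w i‖ = Real.sqrt (‖(euc w) i‖ ^ 2) := by
    rw [Real.sqrt_sq (norm_nonneg _)]; rfl
  rw [this]
  apply Real.sqrt_le_sqrt
  exact Finset.single_le_sum (f := fun j => ‖(euc w) j‖ ^ 2) (fun j _ => by positivity)
    (Finset.mem_univ i)

theorem euc_norm_mulVec_le {n : ℕ} (B : Matrix (Fin n) (Fin n) ℝ) (v : Fin n → ℝ) :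
    ‖euc (B *ᵥ v)‖ ≤ Real.sqrt n * ‖B‖ * ‖euc v‖ := by
  calc ‖euc (B *ᵥ v)‖ ≤ Real.sqrt n * ‖B *ᵥ v‖ := euc_norm_le _
    _ ≤ Real.sqrt n * (‖B‖ * ‖v‖) := by
        have := Matrix.linfty_opNorm_mulVec B v
        have h0 : (0:ℝ) ≤ Real.sqrt n := Real.sqrt_nonneg _
        nlinarith [norm_nonneg (B *ᵥ v)]
    _ ≤ Real.sqrt n * ‖B‖ * ‖euc v‖ := by
        calc Real.sqrt n * (‖B‖ * ‖v‖) = (Real.sqrt n * ‖B‖) * ‖v‖ := by ring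
          _ ≤ (Real.sqrt n * ‖B‖) * ‖euc v‖ :=
              mul_le_mul_of_nonneg_left (pi_norm_le_euc v) (by positivity)

/-- Uniform decay of the inverse powers as operators on Euclidean space. -/
theorem decay_vec {n : ℕ} (T : Matrix (Fin n) (Fin n) ℤ) (hT : IsExpandingZ T)
    {δ : ℝ} (hδ : 0 < δ) :
    ∃ L : ℕ, ∀ l, L ≤ l → ∀ w : Fin n → ℝ,
      ‖euc ((intMat T ^ l)⁻¹ *ᵥ w)‖ ≤ δ * ‖euc w‖ := by
  have h := tendsto_norm_pow_inv T hT
  have h2 : Tendsto (fun l : ℕ => Real.sqrt n * ‖(intMat T)⁻¹ ^ l‖) atTop (𝓝 0) := by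
    simpa using h.const_mul (Real.sqrt n)
  have hev : ∀ᶠ l : ℕ in atTop, Real.sqrt n * ‖(intMat T)⁻¹ ^ l‖ < δ :=
    h2.eventually_lt_const hδ
  obtain ⟨L, hL⟩ := eventually_atTop.1 hev
  refine ⟨L, fun l hl w => ?_⟩
  have hip : (intMat T ^ l)⁻¹ = (intMat T)⁻¹ ^ l := (Matrix.inv_pow' _ _).symm
  rw [hip]
  calc ‖euc ((intMat T)⁻¹ ^ l *ᵥ w)‖
      ≤ Real.sqrt n * ‖(intMat T)⁻¹ ^ l‖ * ‖euc w‖ := euc_norm_mulVec_le _ _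
    _ ≤ δ * ‖euc w‖ := mul_le_mul_of_nonneg_right (hL l hl).le (norm_nonneg _)

end LinftyNorm

theorem zVec_add {n : ℕ} (u v : Fin n → ℤ) : zVec (u + v) = zVec u + zVec v := by
  funext i
  simp [zVec]

theorem zVec_sub {n : ℕ} (u v : Fin n → ℤ) : zVec (u - v) = zVec u - zVec v := by
  funext i
  simp [zVec]

theorem zVec_mulVec {n : ℕ} (B : Matrix (Fin n) (Fin n) ℤ) (w : Fin n → ℤ) :
    zVec (B *ᵥ w) = intMat B *ᵥ zVec w := by
  funext i
  simp only [zVec, intMat, Matrix.mulVec, dotProduct, Matrix.map_apply]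
  push_cast
  rfl

theorem intMat_pow {n : ℕ} (T : Matrix (Fin n) (Fin n) ℤ) (e : ℕ) :
    intMat (T ^ e) = intMat T ^ e := by
  rw [show intMat (T ^ e) = (Int.castRingHom ℝ).mapMatrix (T ^ e) from rfl,
    show intMat T = (Int.castRingHom ℝ).mapMatrix T from rfl, map_pow]

/-- Vector algebra identity for composing cylinder maps. -/
theorem comb_eq {n : ℕ} (M : Matrix (Fin n) (Fin n) ℝ) (hdet : IsUnit M.det)
    (m k : ℕ) (zz u v : Fin n → ℝ) :
    (M ^ k)⁻¹ *ᵥ ((M ^ m)⁻¹ *ᵥ (zz + u) + v)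
      = (M ^ (m + k))⁻¹ *ᵥ ((zz + u) + M ^ m *ᵥ v) := by
  have hMm : IsUnit (M ^ m).det := by rw [Matrix.det_pow]; exact hdet.pow m
  rw [pow_add, Matrix.mul_inv_rev, ← Matrix.mulVec_mulVec]
  congr 1
  conv_rhs => rw [Matrix.mulVec_add, Matrix.mulVec_mulVec,
    Matrix.nonsing_inv_mul _ hMm, Matrix.one_mulVec]

/-- Iterated self-affine invariance: preimages under `T^m` translated by `A_m` stay in `F`. -/
theorem selfAffine_iter_mem {n : ℕ} {T : Matrix (Fin n) (Fin n) ℤ} {A : Set (Fin n → ℤ)}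
    {F : Set (EuclideanSpace ℝ (Fin n))} (hF : IsSelfAffineZ T A F)
    (hdet : IsUnit (intMat T).det) :
    ∀ (m : ℕ) (c : Fin n → ℤ), c ∈ digitSetIter T A m → ∀ z ∈ F,
      euc ((intMat T ^ m)⁻¹ *ᵥ (z + euc (zVec c))) ∈ F := by
  intro m
  induction m with
  | zero =>
    intro c hc z hz
    obtain ⟨a, _, rfl⟩ := hc
    have hc0 : (∑ i : Fin 0, (T ^ (0 - 1 - (i : ℕ))) *ᵥ a i) = 0 := by simp
    rw [hc0]
    have hz0 : zVec (0 : Fin n → ℤ) = 0 := by funext i; simp [zVec]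
    rw [hz0]
    have hinv1 : (intMat T ^ 0)⁻¹ = (1 : Matrix (Fin n) (Fin n) ℝ) := by
      rw [pow_zero]; exact Matrix.inv_eq_right_inv (one_mul 1)
    rw [hinv1]
    have hze : euc ((1 : Matrix (Fin n) (Fin n) ℝ) *ᵥ (z + euc (0 : Fin n → ℝ))) = z := by
      apply WithLp.ofLp_injective 2
      show (1 : Matrix (Fin n) (Fin n) ℝ) *ᵥ (uce z + 0) = uce z
      rw [Matrix.one_mulVec, add_zero]
    rw [hze]
    exact hz
  | succ m ih =>
    intro c hc z hz
    obtain ⟨a, ha, rfl⟩ := hc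
    set c' : Fin n → ℤ := ∑ i : Fin m, (T ^ (m - 1 - (i : ℕ))) *ᵥ a i.succ with hc'def
    have hc' : c' ∈ digitSetIter T A m := ⟨fun i => a i.succ, fun i => ha _, rfl⟩
    have hsplit : (∑ i : Fin (m + 1), (T ^ (m + 1 - 1 - (i : ℕ))) *ᵥ a i)
        = (T ^ m) *ᵥ a 0 + c' := by
      rw [Fin.sum_univ_succ, hc'def]
      have e0 : m + 1 - 1 - (((0 : Fin (m + 1))) : ℕ) = m := by simp
      rw [e0]
      congr 1
      refine Finset.sum_congr rfl fun i _ => ?_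
      have e1 : m + 1 - 1 - ((i.succ : Fin (m + 1)) : ℕ) = m - 1 - (i : ℕ) := by
        simp only [Fin.val_succ]
        omega
      rw [e1]
    rw [hsplit]
    have hzv : zVec ((T ^ m) *ᵥ a 0 + c') = intMat T ^ m *ᵥ zVec (a 0) + zVec c' := by
      rw [zVec_add, zVec_mulVec, intMat_pow]
    have hy := ih c' hc' z hz
    set y : EuclideanSpace ℝ (Fin n) := euc ((intMat T ^ m)⁻¹ *ᵥ (z + euc (zVec c'))) with hydef
    have keyEq : euc ((intMat T ^ (m + 1))⁻¹ *ᵥ (z + euc (zVec ((T ^ m) *ᵥ a 0 + c'))))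
        = euc ((intMat T)⁻¹ *ᵥ (y + euc (zVec (a 0)))) := by
      apply WithLp.ofLp_injective 2
      show (intMat T ^ (m + 1))⁻¹ *ᵥ (uce z + zVec ((T ^ m) *ᵥ a 0 + c'))
        = (intMat T)⁻¹ *ᵥ ((intMat T ^ m)⁻¹ *ᵥ (uce z + zVec c') + zVec (a 0))
      rw [hzv]
      have hcmb := comb_eq (intMat T) hdet m 1 (uce z) (zVec c') (zVec (a 0))
      rw [pow_one] at hcmb
      have hadd : (uce z + (intMat T ^ m *ᵥ zVec (a 0) + zVec c'))
          = ((uce z + zVec c') + intMat T ^ m *ᵥ zVec (a 0)) := by abel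
      rw [hadd, ← hcmb]
    rw [keyEq]
    have hmem : euc ((intMat T)⁻¹ *ᵥ (y + euc (zVec (a 0)))) ∈
        ⋃ b ∈ zVec '' A, (fun x : EuclideanSpace ℝ (Fin n) => euc ((intMat T)⁻¹ *ᵥ (x + euc b))) '' F :=
      Set.mem_biUnion (Set.mem_image_of_mem zVec (ha 0)) (Set.mem_image_of_mem _ hy)
    rwa [← hF.2.2] at hmem

end Statement8Aux


/-- (a) digits of intersecting cylinders differ by at most `diam F`;
(b) digits of disjoint cylinders have extended digit differences tending to infinity
uniformly. -/
theorem cylinder_digit_dichotomy {n : ℕ} (T : Matrix (Fin n) (Fin n) ℤ)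
    (A : Finset (Fin n → ℤ)) (hT : IsExpandingZ T) (hA : A.Nonempty)
    (F : Set (EuclideanSpace ℝ (Fin n))) (hF : IsSelfAffineZ T (↑A) F)
    (k : ℕ) (hk : 1 ≤ k) (ai aj : Fin n → ℤ)
    (hai : ai ∈ digitSetIter T (↑A) k) (haj : aj ∈ digitSetIter T (↑A) k) :
    ((cylinder T k ai F ∩ cylinder T k aj F).Nonempty →
      ‖euc (zVec (aj - ai))‖ ≤ Metric.diam F) ∧
    (cylinder T k ai F ∩ cylinder T k aj F = ∅ →
      ∀ R : ℝ, 0 < R → ∃ L : ℕ, k ≤ L ∧ ∀ l : ℕ, L ≤ l →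
        ∀ a' a'' : Fin n → ℤ, a' ∈ digitSetIter T (↑A) (l - k) →
          a'' ∈ digitSetIter T (↑A) (l - k) →
          R < ‖euc (zVec (((T ^ (l - k)) *ᵥ aj + a'') - ((T ^ (l - k)) *ᵥ ai + a')))‖) := by
  have hdet := isUnit_det_intMat T hT
  have hdetk : IsUnit (intMat T ^ k).det := by
    rw [Matrix.det_pow]; exact hdet.pow k
  constructor
  · -- part (a)
    intro hne
    obtain ⟨x, hx1, hx2⟩ := hne
    obtain ⟨p, hp, hpx⟩ := (Set.mem_image _ _ _).1 hx1
    obtain ⟨q, hq, hqx⟩ := (Set.mem_image _ _ _).1 hx2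
    have h1 : (intMat T ^ k)⁻¹ *ᵥ (uce q + zVec aj)
        = (intMat T ^ k)⁻¹ *ᵥ (uce p + zVec ai) := congrArg WithLp.ofLp (hqx.trans hpx.symm)
    have h2 := congrArg (fun w : Fin n → ℝ => (intMat T ^ k) *ᵥ w) h1
    simp only [Matrix.mulVec_mulVec, Matrix.mul_nonsing_inv _ hdetk, Matrix.one_mulVec] at h2
    have hsub : euc (zVec (aj - ai)) = p - q := by
      apply WithLp.ofLp_injective 2
      rw [WithLp.ofLp_sub]
      show zVec (aj - ai) = uce p - uce q
      rw [zVec_sub]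
      funext i
      have h3 := congrFun h2 i
      simp only [Pi.add_apply, Pi.sub_apply] at h3 ⊢
      linarith
    rw [hsub, ← dist_eq_norm]
    exact Metric.dist_le_diam_of_mem hF.2.1.isBounded hp hq
  · -- part (b)
    intro hdisj R hR
    rcases Nat.eq_zero_or_pos n with hn0 | hn
    · exfalso
      subst hn0
      haveI : Subsingleton (EuclideanSpace ℝ (Fin 0)) :=
        ⟨fun a b => WithLp.ofLp_injective 2 (funext fun i => i.elim0)⟩
      obtain ⟨z, hz⟩ := hF.1
      have h1 : euc ((intMat T ^ k)⁻¹ *ᵥ (z + euc (zVec ai))) ∈ cylinder T k ai F :=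
        Set.mem_image_of_mem _ hz
      have h2 : euc ((intMat T ^ k)⁻¹ *ᵥ (z + euc (zVec aj))) ∈ cylinder T k aj F :=
        Set.mem_image_of_mem _ hz
      have hne : (cylinder T k ai F ∩ cylinder T k aj F).Nonempty :=
        ⟨_, h1, by
          rwa [Subsingleton.elim (euc ((intMat T ^ k)⁻¹ *ᵥ (z + euc (zVec ai))))
            (euc ((intMat T ^ k)⁻¹ *ᵥ (z + euc (zVec aj))))]⟩
      rw [hdisj] at hne
      exact Set.not_nonempty_empty hne
    · have hcont : ∀ b : Fin n → ℤ,
          Continuous fun x : EuclideanSpace ℝ (Fin n) =>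
            euc ((intMat T ^ k)⁻¹ *ᵥ (x + euc (zVec b))) := by
        intro b
        have h1 : Continuous fun x : EuclideanSpace ℝ (Fin n) => x + euc (zVec b) :=
          continuous_id.add continuous_const
        have h2 := LinearMap.continuous_of_finiteDimensional
          (Matrix.toEuclideanLin ((intMat T ^ k)⁻¹))
        exact h2.comp h1
      have hK1 : IsCompact (cylinder T k ai F) := hF.2.1.image (hcont ai)
      have hK2 : IsCompact (cylinder T k aj F) := hF.2.1.image (hcont aj)
      have hNe1 : (cylinder T k ai F).Nonempty := hF.1.image _
      have hNe2 : (cylinder T k aj F).Nonempty := hF.1.image _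
      obtain ⟨x0, hx0, hmin⟩ := hK1.exists_isMinOn hNe1
        (Metric.continuous_infDist_pt (cylinder T k aj F)).continuousOn
      have hx0n : x0 ∉ cylinder T k aj F := fun hmem =>
        (Set.eq_empty_iff_forall_notMem.1 hdisj x0) ⟨hx0, hmem⟩
      have hεpos : 0 < Metric.infDist x0 (cylinder T k aj F) :=
        (hK2.isClosed.notMem_iff_infDist_pos hNe2).1 hx0n
      set ε := Metric.infDist x0 (cylinder T k aj F) with hεdef
      have h2R : (0:ℝ) < 2 * (R + 1) := by linarith
      have hδpos : 0 < ε / (2 * (R + 1)) := div_pos hεpos h2R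
      obtain ⟨L0, hL0⟩ := decay_vec T hT hδpos
      refine ⟨max L0 k, le_max_right _ _, ?_⟩
      intro l hl a' a'' ha' ha''
      obtain ⟨z, hz⟩ := hF.1
      have hkl : k ≤ l := le_trans (le_max_right _ _) hl
      set m := l - k with hmdef
      have hmk : m + k = l := by rw [hmdef]; exact Nat.sub_add_cancel hkl
      have hy1 : euc ((intMat T ^ m)⁻¹ *ᵥ (z + euc (zVec a'))) ∈ F :=
        selfAffine_iter_mem hF hdet m a' ha' z hz
      have hy2 : euc ((intMat T ^ m)⁻¹ *ᵥ (z + euc (zVec a''))) ∈ F :=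
        selfAffine_iter_mem hF hdet m a'' ha'' z hz
      have hx1 : euc ((intMat T ^ k)⁻¹ *ᵥ
          (euc ((intMat T ^ m)⁻¹ *ᵥ (z + euc (zVec a'))) + euc (zVec ai)))
          ∈ cylinder T k ai F := Set.mem_image_of_mem _ hy1
      have hx2 : euc ((intMat T ^ k)⁻¹ *ᵥ
          (euc ((intMat T ^ m)⁻¹ *ᵥ (z + euc (zVec a''))) + euc (zVec aj)))
          ∈ cylinder T k aj F := Set.mem_image_of_mem _ hy2
      have hsep : ε ≤ dist
          (euc ((intMat T ^ k)⁻¹ *ᵥ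
            (euc ((intMat T ^ m)⁻¹ *ᵥ (z + euc (zVec a'))) + euc (zVec ai))))
          (euc ((intMat T ^ k)⁻¹ *ᵥ
            (euc ((intMat T ^ m)⁻¹ *ᵥ (z + euc (zVec a''))) + euc (zVec aj)))) :=
        le_trans (isMinOn_iff.1 hmin _ hx1) (Metric.infDist_le_dist_of_mem hx2)
      have key1 : uce (euc ((intMat T ^ k)⁻¹ *ᵥ
            (euc ((intMat T ^ m)⁻¹ *ᵥ (z + euc (zVec a'))) + euc (zVec ai))))
          = (intMat T ^ l)⁻¹ *ᵥ ((uce z + zVec a') + intMat T ^ m *ᵥ zVec ai) := by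
        show (intMat T ^ k)⁻¹ *ᵥ
            ((intMat T ^ m)⁻¹ *ᵥ (uce z + zVec a') + zVec ai) = _
        rw [comb_eq _ hdet, hmk]
      have key2 : uce (euc ((intMat T ^ k)⁻¹ *ᵥ
            (euc ((intMat T ^ m)⁻¹ *ᵥ (z + euc (zVec a''))) + euc (zVec aj))))
          = (intMat T ^ l)⁻¹ *ᵥ ((uce z + zVec a'') + intMat T ^ m *ᵥ zVec aj) := by
        show (intMat T ^ k)⁻¹ *ᵥ
            ((intMat T ^ m)⁻¹ *ᵥ (uce z + zVec a'') + zVec aj) = _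
        rw [comb_eq _ hdet, hmk]
      set d : Fin n → ℤ := (T ^ m) *ᵥ aj + a'' - ((T ^ m) *ᵥ ai + a') with hddef
      have hzd : zVec d = (intMat T ^ m *ᵥ zVec aj + zVec a'')
          - (intMat T ^ m *ᵥ zVec ai + zVec a') := by
        rw [hddef, zVec_sub, zVec_add, zVec_add, zVec_mulVec, zVec_mulVec, intMat_pow]
      have hdist2 : dist
          (euc ((intMat T ^ k)⁻¹ *ᵥ
            (euc ((intMat T ^ m)⁻¹ *ᵥ (z + euc (zVec a'))) + euc (zVec ai))))
          (euc ((intMat T ^ k)⁻¹ *ᵥ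
            (euc ((intMat T ^ m)⁻¹ *ᵥ (z + euc (zVec a''))) + euc (zVec aj))))
          = ‖euc ((intMat T ^ l)⁻¹ *ᵥ zVec d)‖ := by
        rw [dist_eq_norm]
        have hsubeq : (euc ((intMat T ^ k)⁻¹ *ᵥ
              (euc ((intMat T ^ m)⁻¹ *ᵥ (z + euc (zVec a'))) + euc (zVec ai))))
            - (euc ((intMat T ^ k)⁻¹ *ᵥ
              (euc ((intMat T ^ m)⁻¹ *ᵥ (z + euc (zVec a''))) + euc (zVec aj))))
            = -(euc ((intMat T ^ l)⁻¹ *ᵥ zVec d)) := by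
          apply WithLp.ofLp_injective 2
          rw [WithLp.ofLp_sub, WithLp.ofLp_neg]
          show uce (euc ((intMat T ^ k)⁻¹ *ᵥ
              (euc ((intMat T ^ m)⁻¹ *ᵥ (z + euc (zVec a'))) + euc (zVec ai))))
            - uce (euc ((intMat T ^ k)⁻¹ *ᵥ
              (euc ((intMat T ^ m)⁻¹ *ᵥ (z + euc (zVec a''))) + euc (zVec aj))))
            = -((intMat T ^ l)⁻¹ *ᵥ zVec d)
          rw [key1, key2, ← Matrix.mulVec_sub, ← Matrix.mulVec_neg]
          congr 1
          rw [hzd]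
          abel
        rw [hsubeq, norm_neg]
      have hbound := hL0 l (le_trans (le_max_left _ _) hl) (zVec d)
      have hfinal : ε ≤ ε / (2 * (R + 1)) * ‖euc (zVec d)‖ :=
        le_trans (hsep.trans_eq hdist2) hbound
      have hX : (0:ℝ) ≤ ‖euc (zVec d)‖ := norm_nonneg _
      have hmul : ε * (2 * (R + 1)) ≤ ε * ‖euc (zVec d)‖ := by
        have h4 := mul_le_mul_of_nonneg_right hfinal (le_of_lt h2R)
        calc ε * (2 * (R + 1))
            ≤ (ε / (2 * (R + 1)) * ‖euc (zVec d)‖) * (2 * (R + 1)) := h4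
          _ = ε * ‖euc (zVec d)‖ := by field_simp
      have hXge : 2 * (R + 1) ≤ ‖euc (zVec d)‖ := le_of_mul_le_mul_left hmul hεpos
      linarith

end FracPert
end
end
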